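/- For every integer m ≥ 6 there is no real number φ with 0 < φ < π/2 of the form φ = jπ/m for a positive integer j such that sin(φ + 2π/m) = 3·sin(φ). -/
import Mathlib


open Real

theorem no_sin_solution (m : ℕ) (hm : 6 ≤ m) (j : ℕ) (hj : 0 < j)
    (hlt : (j : ℝ) * π / m < π / 2) :
    Real.sin ((j : ℝ) * π / m + 2 * π / m) ≠ 3 * Real.sin ((j : ℝ) * π / m) := by
  have hmpos : (0:ℝ) < m := by positivity
  set θ : ℝ := π / m with hθ
  have hθpos : 0 < θ := by positivity
  have hθ6 : θ ≤ π / 6 := by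
    rw [hθ]
    apply div_le_div_of_nonneg_left pi_pos.le (by norm_num)
    exact_mod_cast hm
  have hφ : (j : ℝ) * π / m = (j : ℝ) * θ := by rw [hθ]; ring
  have h2 : 2 * π / m = 2 * θ := by rw [hθ]; ring
  rw [hφ, h2]
  rw [hφ] at hlt
  rcases eq_or_lt_of_le (Nat.one_le_iff_ne_zero.mpr hj.ne') with hj1 | hj2
  · -- j = 1 case: sin (3θ) < 3 sin θ
    have hj1' : (j : ℝ) = 1 := by exact_mod_cast hj1.symm
    rw [hj1', one_mul]
    have h3 : θ + 2 * θ = 3 * θ := by ring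
    rw [h3, Real.sin_three_mul]
    have hs : 0 < Real.sin θ :=
      Real.sin_pos_of_pos_of_lt_pi hθpos (lt_of_le_of_lt hθ6 (by linarith [pi_pos]))
    nlinarith [pow_pos hs 3]
  · -- j ≥ 2
    have hj2' : (2 : ℝ) ≤ (j : ℝ) := by exact_mod_cast hj2
    set φ : ℝ := (j : ℝ) * θ with hφdef
    have hφlt : φ < π / 2 := hlt
    have h2θle : 2 * θ ≤ φ := by
      rw [hφdef]
      nlinarith
    have h2θpos : 0 < 2 * θ := by linarith
    have h2θlt : 2 * θ < π := by linarith [pi_pos]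
    have hsin2θ : 0 < Real.sin (2 * θ) := Real.sin_pos_of_pos_of_lt_pi h2θpos h2θlt
    have hmono : Real.sin (2 * θ) ≤ Real.sin φ := by
      apply Real.sin_le_sin_of_le_of_le_pi_div_two (by linarith) hφlt.le h2θle
    have hsadd : Real.sin (φ + 2 * θ) = Real.sin φ * Real.cos (2 * θ) + Real.cos φ * Real.sin (2 * θ) :=
      Real.sin_add φ (2 * θ)
    intro h
    nlinarith [Real.cos_le_one (2 * θ), Real.cos_le_one φ, hsin2θ, hmono]
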